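/- Let Z be the operator on L²(𝕋) with Z(z^k) = (2πk/n)z^k and Θ multiplication by θ ∈ [0,2π). Let Π_Θ = M_{1_E} (multiplication by the indicator of the right half circle) and Π_Z the projection onto span{z^k : cos(2πk/n) > 0}. Then for n > 4N, the N×N matrix with entries ⟨[Π_Θ,Π_Z] z^{⌈n/4⌉+l-1}, z^{⌈n/4⌉-k}⟩ for 1 ≤ k,l ≤ N equals the negative of the N-th truncated Hankel matrix (1̂_E(1-k-l))_{1≤k,l≤N}. -/

import Mathlib

open MeasureTheory Real AddCircle ContinuousLinearMap

noncomputable section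

local instance : Fact (0 < 2 * π) := ⟨Real.two_pi_pos⟩

/-- `L²` of the circle (with normalized Haar measure), with orthonormal basis
`{z^k : k ∈ ℤ}` given by `fourierLp 2`. -/
abbrev L2T := Lp ℂ 2 (@haarAddCircle (2 * π) _)

/-- The Fourier coefficients of the indicator of the right half circle
`E = {z ∈ 𝕋 : Re z > 0}`. -/
def hatE (p : ℤ) : ℂ :=
  if p = 0 then (1 / 2 : ℂ) else ((Real.sin (π * p / 2) / (π * p) : ℝ) : ℂ)

/-- For `x ∈ [-π, π]`, the real part of `fourier 1 x` (i.e. `cos x`) is positive iff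
`x ∈ (-π/2, π/2)`. -/
lemma cos_iff_aux (x : ℝ) (hx : x ∈ Set.Icc (-π) π) :
    (0 < (fourier 1 (x : AddCircle (2*π))).re) ↔ x ∈ Set.Ioo (-(π/2)) (π/2) := by
  have h1 : (fourier 1 (x : AddCircle (2*π))).re = Real.cos x := by
    rw [fourier_coe_apply]
    have hπ : (π:ℂ) ≠ 0 := by exact_mod_cast Real.pi_ne_zero
    have : 2 * (π:ℂ) * Complex.I * (1:ℤ) * x / ((2 * π : ℝ) : ℂ) = (x:ℂ) * Complex.I := by
      push_cast
      field_simp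
    rw [this, Complex.exp_ofReal_mul_I_re]
  rw [h1]
  constructor
  · intro h
    by_contra hc
    rcases hx with ⟨hx1, hx2⟩
    simp only [Set.mem_Ioo, not_and_or, not_lt] at hc
    rcases hc with hc | hc
    · have : Real.cos x ≤ 0 := by
        rw [← Real.cos_neg]
        exact Real.cos_nonpos_of_pi_div_two_le_of_le (by linarith) (by linarith)
      linarith
    · exact absurd h (not_lt.2 (Real.cos_nonpos_of_pi_div_two_le_of_le hc (by linarith)))
  · exact fun h => Real.cos_pos_of_mem_Ioo h

/-- The Fourier coefficients of the indicator of the right half circle are given by `hatE`. -/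
lemma fourierCoeff_ind (p : ℤ) :
    fourierCoeff (Set.indicator {θ : AddCircle (2 * π) | 0 < (fourier 1 θ).re}
      (fun _ => (1 : ℂ))) p = hatE p := by
  rw [fourierCoeff_eq_intervalIntegral _ p (-π)]
  have hint : -π + 2 * π = π := by ring
  rw [hint]
  have hcong : ∫ x in (-π)..π, fourier (-p) (x : AddCircle (2*π)) •
      Set.indicator {θ : AddCircle (2 * π) | 0 < (fourier 1 θ).re} (fun _ => (1:ℂ)) x
      = ∫ x in (-π)..π, Set.indicator (Set.Ioo (-(π/2)) (π/2))
          (fun x : ℝ => fourier (-p) (x : AddCircle (2*π))) x := by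
    apply intervalIntegral.integral_congr
    intro x hx
    have hx' : x ∈ Set.Icc (-π) π := by
      rwa [Set.uIcc_of_le (by linarith [Real.pi_pos])] at hx
    simp only [Set.indicator_apply, Set.mem_setOf_eq, smul_eq_mul]
    by_cases h : x ∈ Set.Ioo (-(π/2)) (π/2)
    · rw [if_pos ((cos_iff_aux x hx').2 h), if_pos h, mul_one]
    · rw [if_neg (fun hm => h ((cos_iff_aux x hx').1 hm)), if_neg h, mul_zero]
  rw [hcong]
  have hsub : Set.Ioo (-(π/2)) (π/2) ⊆ Set.Ioc (-π) π := by
    intro x hx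
    exact ⟨by linarith [hx.1, Real.pi_pos], le_of_lt (by linarith [hx.2, Real.pi_pos])⟩
  have hind : ∫ x in (-π)..π, Set.indicator (Set.Ioo (-(π/2)) (π/2))
        (fun x : ℝ => fourier (-p) (x : AddCircle (2*π))) x
      = ∫ x in (-(π/2))..(π/2), fourier (-p) (x : AddCircle (2*π)) := by
    rw [intervalIntegral.integral_of_le (by linarith [Real.pi_pos]),
      intervalIntegral.integral_of_le (by linarith [Real.pi_pos]),
      MeasureTheory.integral_indicator measurableSet_Ioo,
      Measure.restrict_restrict measurableSet_Ioo,
      Set.inter_eq_left.2 hsub, ← MeasureTheory.integral_Ioc_eq_integral_Ioo]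
  rw [hind]
  rcases eq_or_ne p 0 with rfl | hp
  · simp only [neg_zero, fourier_zero, hatE, if_pos rfl]
    rw [intervalIntegral.integral_const]
    rw [smul_smul]
    have : 1 / (2 * π) * (π / 2 - -(π / 2)) = 1/2 := by
      field_simp
      ring
    rw [this]
    norm_num
  · have hexp : ∀ x : ℝ, fourier (-p) (x : AddCircle (2*π))
        = Complex.exp ((-(p:ℂ) * Complex.I) * x) := by
      intro x
      rw [fourier_coe_apply]
      congr 1
      have hπ : (π:ℂ) ≠ 0 := by exact_mod_cast Real.pi_ne_zero
      field_simp
      push_cast; ring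
    simp_rw [hexp]
    rw [integral_exp_mul_complex (by
      simp [Complex.ext_iff]
      exact_mod_cast hp)]
    rw [hatE, if_neg hp]
    have hsin : ((Real.sin (π * p / 2) / (π * p) : ℝ) : ℂ)
        = Complex.sin ((π * p / 2 : ℝ)) / ((π : ℂ) * p) := by
      push_cast [Complex.ofReal_sin]
      ring_nf
    rw [hsin, Complex.sin]
    have hπ : (π:ℂ) ≠ 0 := by exact_mod_cast Real.pi_ne_zero
    have hpc : (p:ℂ) ≠ 0 := by exact_mod_cast hp
    have h1 : -(p:ℂ) * Complex.I * (π/2:ℝ) = -(π * p / 2 : ℝ) * Complex.I := by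
      push_cast; ring
    have h2 : -(p:ℂ) * Complex.I * (-(π/2):ℝ) = (π * p / 2 : ℝ) * Complex.I := by
      push_cast; ring
    rw [h1, h2]
    rw [Complex.real_smul]
    push_cast
    field_simp
    ring_nf
    simp [Complex.I_sq]

/-- Matrix coefficients of the projection `Π_Z` against an arbitrary vector. -/
lemma PZ_inner (n : ℕ) (PZ : L2T →L[ℂ] L2T)
    (hPZ : ∀ p : ℤ,
      PZ (fourierLp 2 p) =
        (if 0 < Real.cos (2 * π * p / n) then (1 : ℂ) else 0) • fourierLp 2 p)
    (r : ℤ) (f : L2T) :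
    inner (𝕜 := ℂ) (fourierLp 2 r) (PZ f) =
      (if 0 < Real.cos (2 * π * r / n) then (1 : ℂ) else 0) *
        inner (𝕜 := ℂ) (fourierLp 2 r) f := by
  set c : ℤ → ℂ := fun p => if 0 < Real.cos (2 * π * p / n) then (1 : ℂ) else 0 with hc
  have hb := (fourierBasis (T := 2*π)).hasSum_repr f
  have h1 := (hb.mapL PZ).mapL (innerSL ℂ (fourierLp 2 r))
  have horth := orthonormal_fourier (T := 2*π)
  rw [orthonormal_iff_ite] at horth
  have hcoe : ∀ i : ℤ, (fourierBasis (T := 2*π)) i = fourierLp 2 i :=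
    fun i => congrFun coe_fourierBasis i
  have heq : (fun i => innerSL ℂ (fourierLp 2 r) (PZ (fourierBasis.repr f i • fourierBasis i)))
      = fun i => if i = r then c r * fourierBasis.repr f r else 0 := by
    funext i
    rw [innerSL_apply_apply, hcoe i, ContinuousLinearMap.map_smul, hPZ i, inner_smul_right,
      inner_smul_right, horth r i]
    by_cases h : i = r
    · subst h; rw [hc]; by_cases h0 : 0 < Real.cos (2 * π * i / n) <;> simp [h0]
    · simp [h, Ne.symm h]
  rw [heq] at h1
  have h2 : HasSum (fun i : ℤ => if i = r then c r * fourierBasis.repr f r else 0)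
      (c r * fourierBasis.repr f r) := hasSum_ite_eq r _
  have := h2.unique h1
  rw [innerSL_apply_apply] at this
  rw [← this, fourierBasis.repr_apply_apply, hcoe r]

/-- Matrix coefficients of multiplication by the indicator of the right half circle. -/
lemma PTheta_inner (PTheta : L2T →L[ℂ] L2T)
    (hPTheta : ∀ f : L2T,
      (PTheta f : AddCircle (2 * π) → ℂ) =ᵐ[haarAddCircle]
        fun θ => Set.indicator {θ : AddCircle (2 * π) | 0 < (fourier 1 θ).re}
          (fun _ => (1 : ℂ)) θ * f θ)
    (r q : ℤ) :
    inner (𝕜 := ℂ) (fourierLp 2 r) (PTheta (fourierLp 2 q)) =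
      fourierCoeff (Set.indicator {θ : AddCircle (2 * π) | 0 < (fourier 1 θ).re}
          (fun _ => (1 : ℂ))) (r - q) := by
  rw [MeasureTheory.L2.inner_def, fourierCoeff]
  apply MeasureTheory.integral_congr_ae
  filter_upwards [coeFn_fourierLp 2 r (T := 2*π), coeFn_fourierLp 2 q (T := 2*π),
    hPTheta (fourierLp 2 q)] with θ h1 h2 h3
  rw [h1, h3, h2, RCLike.inner_apply, ← fourier_neg, smul_eq_mul]
  have : fourier (-(r - q)) θ = fourier (-r) θ * fourier q θ := by
    rw [← fourier_add]; congr 1; ring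
  rw [this]
  ring

/-- Let `Π_Θ` be multiplication by the indicator of the right half circle `E`, and let
`Π_Z` be the projection onto `span{z^p : cos(2πp/n) > 0}`.  For `n > 4N` and
`1 ≤ k, l ≤ N`, the matrix entry
`⟨[Π_Θ, Π_Z] z^{⌈n/4⌉+l-1}, z^{⌈n/4⌉-k}⟩` equals `-1̂_E(1-k-l)`, i.e. the `N × N` matrix
of these entries is the negative of the `N`-th truncated Hankel matrix of `1_E`. -/
theorem commutator_matrix_entries_eq_neg_hankel
    (n N : ℕ) (hn : 4 * N < n)
    (PTheta : L2T →L[ℂ] L2T)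
    (hPTheta : ∀ f : L2T,
      (PTheta f : AddCircle (2 * π) → ℂ) =ᵐ[haarAddCircle]
        fun θ => Set.indicator {θ : AddCircle (2 * π) | 0 < (fourier 1 θ).re}
          (fun _ => (1 : ℂ)) θ * f θ)
    (PZ : L2T →L[ℂ] L2T)
    (hPZ : ∀ p : ℤ,
      PZ (fourierLp 2 p) =
        (if 0 < Real.cos (2 * π * p / n) then (1 : ℂ) else 0) • fourierLp 2 p)
    (k l : ℕ) (hk1 : 1 ≤ k) (hkN : k ≤ N) (hl1 : 1 ≤ l) (hlN : l ≤ N) :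
    inner (𝕜 := ℂ) (fourierLp 2 (((n + 3) / 4 : ℕ) - (k : ℤ)))
        ((PTheta ∘L PZ - PZ ∘L PTheta) (fourierLp 2 (((n + 3) / 4 : ℕ) + (l : ℤ) - 1))) =
      -hatE (1 - k - l) := by
  set M : ℤ := (((n + 3) / 4 : ℕ) : ℤ) with hM
  set r : ℤ := M - k with hr
  set q : ℤ := M + l - 1 with hq
  -- integer inequalities
  have hr1 : 0 ≤ r := by omega
  have hr2 : 4 * r < n := by omega
  have hq1 : (n : ℤ) ≤ 4 * q := by omega
  have hq2 : 4 * q ≤ 3 * n := by omega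
  have hn0 : (0 : ℝ) < n := by
    have : 0 < n := by omega
    exact_mod_cast this
  have hr1' : (0 : ℝ) ≤ (r : ℝ) := by exact_mod_cast hr1
  have hr2' : 4 * (r : ℝ) < n := by exact_mod_cast hr2
  have hq1' : (n : ℝ) ≤ 4 * (q : ℝ) := by exact_mod_cast hq1
  have hq2' : 4 * (q : ℝ) ≤ 3 * n := by exact_mod_cast hq2
  -- the cosine signs
  have hcr : 0 < Real.cos (2 * π * r / n) := by
    apply Real.cos_pos_of_mem_Ioo
    constructor
    · have : (0 : ℝ) ≤ 2 * π * r / n :=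
        div_nonneg (by positivity) hn0.le
      linarith [Real.pi_pos]
    · rw [div_lt_iff₀ hn0]
      nlinarith [Real.pi_pos]
  have hcq : ¬ 0 < Real.cos (2 * π * q / n) := by
    apply not_lt.2
    apply Real.cos_nonpos_of_pi_div_two_le_of_le
    · rw [le_div_iff₀ hn0]
      nlinarith [Real.pi_pos]
    · rw [div_le_iff₀ hn0]
      nlinarith [Real.pi_pos]
  have hqzero : PZ (fourierLp 2 q) = 0 := by
    rw [hPZ q, if_neg hcq, zero_smul]
  rw [ContinuousLinearMap.sub_apply, ContinuousLinearMap.comp_apply,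
    ContinuousLinearMap.comp_apply, inner_sub_right, hqzero, map_zero, inner_zero_right,
    PZ_inner n PZ hPZ, if_pos hcr, PTheta_inner PTheta hPTheta, fourierCoeff_ind,
    show r - q = 1 - (k : ℤ) - l from by rw [hr, hq]; ring, one_mul, zero_sub]
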